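/- arXiv:1205.2750 — 2 statements merged into one kernel-verified Lean document; each statement's English description precedes it below -/
import Mathlib

section
/- The mdG residual is a Radau polynomial for decoupled linear right-hand sides: Let a < b, q ≥ 1, α, β ∈ ℝ, u_a ∈ ℝ, and let U be a polynomial of degree ≤ q on [a,b] satisfying the discontinuous Galerkin orthogonality (U(a) − u_a) v(a) + ∫_a^b (U'(t) − (α U(t) + β)) v(t) dt = 0 for every polynomial v of degree ≤ q. Then the residual R(t) = U'(t) − (α U(t) + β), which is a polynomial of degree ≤ q, is a scalar multiple of the rescaled q-th Radau polynomial: R(t) = c · Q_q(σ(t)) for some c ∈ ℝ, where σ(t) = (2t − a − b)/(b − a) (so σ(a) = −1). -/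
open MeasureTheory intervalIntegral Polynomial

/-- The `q`-th Legendre polynomial, via Rodrigues' formula
`P_q(x) = (1/(2^q q!)) (d/dx)^q ((x² − 1)^q)`. -/
noncomputable def legendrePoly (q : ℕ) : Polynomial ℝ :=
  Polynomial.C (1 / (2 ^ q * (Nat.factorial q) : ℝ)) *
    (Polynomial.derivative^[q] ((Polynomial.X ^ 2 - 1) ^ q))


lemma polyMulIntegrable (p r : Polynomial ℝ) (a b : ℝ) :
    IntervalIntegrable (fun t => p.eval t * r.eval t) volume a b :=
  (p.continuous.mul r.continuous).intervalIntegrable a b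

lemma integral_poly_derivative (p : Polynomial ℝ) (a b : ℝ) :
    ∫ t in a..b, p.derivative.eval t = p.eval b - p.eval a :=
  intervalIntegral.integral_deriv_eq_sub' _ (funext fun x => Polynomial.deriv p)
    (fun x _ => p.differentiableAt) (p.derivative.continuous.continuousOn)

lemma poly_ibp (p r : Polynomial ℝ) (a b : ℝ) :
    ∫ t in a..b, (Polynomial.derivative p).eval t * r.eval t
      = p.eval b * r.eval b - p.eval a * r.eval a
        - ∫ t in a..b, p.eval t * (Polynomial.derivative r).eval t := by
  have h := integral_poly_derivative (p * r) a b
  rw [derivative_mul] at h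
  have hsplit : (∫ t in a..b, ((Polynomial.derivative p) * r + p * (Polynomial.derivative r)).eval t)
      = (∫ t in a..b, (Polynomial.derivative p).eval t * r.eval t)
        + ∫ t in a..b, p.eval t * (Polynomial.derivative r).eval t := by
    rw [← intervalIntegral.integral_add (polyMulIntegrable _ _ _ _) (polyMulIntegrable _ _ _ _)]
    simp [Polynomial.eval_add]
  rw [hsplit] at h
  simp only [Polynomial.eval_mul] at h
  linarith

lemma exists_factor (q : ℕ) : ∀ j ≤ q,
    ∃ g : Polynomial ℝ, Polynomial.derivative^[j] ((X^2 - 1)^q) = (X^2 - 1)^(q - j) * g := by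
  intro j
  induction j with
  | zero => exact fun _ => ⟨1, by simp⟩
  | succ j ih =>
    intro hj
    obtain ⟨g, hg⟩ := ih (Nat.le_of_succ_le hj)
    refine ⟨C ((q - j : ℕ) : ℝ) * (2 * X) * g + (X^2 - 1) * Polynomial.derivative g, ?_⟩
    rw [Function.iterate_succ_apply', hg, derivative_mul, derivative_pow]
    have h1 : (X^2 - 1 : Polynomial ℝ)^(q - j) = (X^2 - 1)^(q - (j+1)) * (X^2 - 1) := by
      rw [← pow_succ]; congr 1; omega
    have h2 : q - j - 1 = q - (j + 1) := by omega
    have h3 : Polynomial.derivative ((X : Polynomial ℝ)^2 - 1) = 2 * X := by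
      simp [derivative_pow, map_ofNat]
    rw [h1, h2, h3]
    ring

lemma boundary_eval (q j : ℕ) (hj : j < q) (x : ℝ) (hx : x^2 = 1) :
    (Polynomial.derivative^[j] ((X^2 - 1)^q : Polynomial ℝ)).eval x = 0 := by
  obtain ⟨g, hg⟩ := exists_factor q j hj.le
  rw [hg]
  have : q - j ≠ 0 := by omega
  simp [hx, zero_pow this]

lemma iter_ibp (q : ℕ) (r : Polynomial ℝ) : ∀ k ≤ q,
    (∫ x in (-1:ℝ)..1, (Polynomial.derivative^[q] ((X^2-1)^q : Polynomial ℝ)).eval x * r.eval x)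
      = (-1:ℝ)^k * ∫ x in (-1:ℝ)..1,
          (Polynomial.derivative^[q-k] ((X^2-1)^q : Polynomial ℝ)).eval x
            * (Polynomial.derivative^[k] r).eval x := by
  intro k
  induction k with
  | zero => simp
  | succ k ih =>
    intro hk
    rw [ih (Nat.le_of_succ_le hk)]
    have hstep : Polynomial.derivative^[q-k] ((X^2-1)^q : Polynomial ℝ)
        = Polynomial.derivative (Polynomial.derivative^[q-(k+1)] ((X^2-1)^q : Polynomial ℝ)) := by
      have h' : q - k = (q - (k+1)) + 1 := by omega
      rw [h', Function.iterate_succ_apply']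
    rw [hstep, poly_ibp]
    rw [boundary_eval q (q - (k+1)) (by omega) 1 (by norm_num),
        boundary_eval q (q - (k+1)) (by omega) (-1) (by norm_num)]
    simp only [← Function.iterate_succ_apply']
    rw [pow_succ]
    ring

lemma legOrth (q : ℕ) (r : Polynomial ℝ) (hr : r.natDegree < q) :
    ∫ x in (-1:ℝ)..1, (legendrePoly q).eval x * r.eval x = 0 := by
  have h := iter_ibp q r q le_rfl
  rw [Polynomial.iterate_derivative_eq_zero hr] at h
  simp only [Polynomial.eval_zero, mul_zero, intervalIntegral.integral_zero] at h
  unfold legendrePoly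
  simp only [Polynomial.eval_mul, Polynomial.eval_C, mul_assoc]
  rw [intervalIntegral.integral_const_mul, h]
  simp

lemma base_monic (q : ℕ) : (((X:Polynomial ℝ)^2 - 1)^q).Monic := by
  have : ((X:Polynomial ℝ)^2 - 1) = X^2 - C 1 := by simp
  rw [this]
  exact (monic_X_pow_sub_C (1:ℝ) two_ne_zero).pow q

lemma base_natDegree (q : ℕ) : (((X:Polynomial ℝ)^2 - 1)^q).natDegree = 2 * q := by
  have : ((X:Polynomial ℝ)^2 - 1) = X^2 - C 1 := by simp
  rw [this, Monic.natDegree_pow]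
  · rw [natDegree_X_pow_sub_C]; ring
  · exact monic_X_pow_sub_C (1:ℝ) two_ne_zero

lemma leg_coeff (q : ℕ) : (legendrePoly q).coeff q ≠ 0 := by
  unfold legendrePoly
  rw [coeff_C_mul, Polynomial.coeff_iterate_derivative]
  have h1 : (((X:Polynomial ℝ)^2 - 1)^q).coeff (q + q) = 1 := by
    have := (base_monic q).leadingCoeff
    rwa [Polynomial.leadingCoeff, base_natDegree, two_mul] at this
  rw [h1]
  have h2 : 0 < (q + q).descFactorial q := by
    rcases Nat.eq_zero_or_pos ((q+q).descFactorial q) with h | h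
    · rw [Nat.descFactorial_eq_zero_iff_lt] at h; omega
    · exact h
  have h3 : (0:ℝ) < 2 ^ q * (Nat.factorial q : ℝ) := by positivity
  rw [nsmul_eq_mul]
  positivity

lemma leg_natDegree (q : ℕ) : (legendrePoly q).natDegree = q := by
  apply le_antisymm
  · unfold legendrePoly
    refine (natDegree_C_mul_le _ _).trans ?_
    refine (Polynomial.natDegree_iterate_derivative _ _).trans ?_
    rw [base_natDegree]; omega
  · exact le_natDegree_of_ne_zero (leg_coeff q)

lemma iter_deriv_eval_root (c : ℝ) : ∀ (n : ℕ) (g : Polynomial ℝ),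
    (Polynomial.derivative^[n] ((X - C c)^n * g)).eval c = n.factorial * g.eval c := by
  intro n
  induction n with
  | zero => intro g; simp
  | succ n ih =>
    intro g
    have hd : Polynomial.derivative ((X - C c)^(n+1) * g)
        = (X - C c)^n * (C ((n:ℝ)+1) * g + (X - C c) * Polynomial.derivative g) := by
      rw [derivative_mul, derivative_pow]
      simp only [derivative_sub, derivative_X, derivative_C, sub_zero, mul_one,
        Nat.add_sub_cancel, Nat.cast_add, Nat.cast_one, map_add, map_natCast, map_one]
      ring
    rw [Function.iterate_succ_apply, hd, ih]
    simp [Nat.factorial_succ]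
    ring

lemma leg_eval_neg_one (q : ℕ) : (legendrePoly q).eval (-1) = (-1)^q := by
  unfold legendrePoly
  have hsplit : (((X:Polynomial ℝ)^2 - 1)^q) = (X - C (-1))^q * (X - C 1)^q := by
    rw [← mul_pow]; congr 1
    simp; ring
  rw [Polynomial.eval_mul, hsplit, iter_deriv_eval_root, Polynomial.eval_C]
  simp only [Polynomial.eval_pow, Polynomial.eval_sub, Polynomial.eval_X, Polynomial.eval_C]
  rw [show (-1 - 1 : ℝ) = -2 by norm_num, neg_pow]
  have h2 : (2:ℝ)^q ≠ 0 := by positivity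
  have hf : (Nat.factorial q : ℝ) ≠ 0 := Nat.cast_ne_zero.mpr q.factorial_ne_zero
  field_simp

lemma poly_eq_zero_of_integral_sq (r : Polynomial ℝ)
    (h : ∫ x in (-1:ℝ)..1, r.eval x * r.eval x = 0) : r = 0 := by
  by_contra hr
  have hfin : Set.Finite {x : ℝ | r.IsRoot x} := r.finite_setOf_isRoot hr
  have hle : ((-1:ℝ)) ≤ 1 := by norm_num
  rw [intervalIntegral.integral_of_le hle] at h
  have hint : IntegrableOn (fun x => r.eval x * r.eval x) (Set.Ioc (-1:ℝ) 1) volume :=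
    (r.continuous.mul r.continuous).integrableOn_Ioc
  have hae := (MeasureTheory.integral_eq_zero_iff_of_nonneg
    (fun x => mul_self_nonneg (r.eval x)) hint).mp h
  -- hae : (fun x => r.eval x * r.eval x) =ᵐ[volume.restrict (Set.Ioc (-1) 1)] 0
  have hae' : ∀ᵐ x ∂(volume.restrict (Set.Ioc (-1:ℝ) 1)), x ∈ {x : ℝ | r.IsRoot x} := by
    filter_upwards [hae] with x hx
    have : r.eval x * r.eval x = 0 := hx
    have := mul_self_eq_zero.mp this
    exact this
  have h0 : (volume.restrict (Set.Ioc (-1:ℝ) 1)) {x : ℝ | r.IsRoot x}ᶜ = 0 :=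
    MeasureTheory.mem_ae_iff.mp hae'
  rw [MeasureTheory.Measure.restrict_apply hfin.measurableSet.compl] at h0
  have hsub : Set.Ioc (-1:ℝ) 1 ⊆ {x : ℝ | r.IsRoot x} ∪ ({x : ℝ | r.IsRoot x}ᶜ ∩ Set.Ioc (-1:ℝ) 1) := by
    intro x hx
    by_cases hroot : r.IsRoot x
    · exact Or.inl hroot
    · exact Or.inr ⟨hroot, hx⟩
  have hIoc : volume (Set.Ioc (-1:ℝ) 1) = 0 := by
    refine le_antisymm ?_ zero_le
    calc volume (Set.Ioc (-1:ℝ) 1)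
        ≤ volume ({x : ℝ | r.IsRoot x} ∪ ({x : ℝ | r.IsRoot x}ᶜ ∩ Set.Ioc (-1:ℝ) 1)) :=
          measure_mono hsub
      _ ≤ volume {x : ℝ | r.IsRoot x} + volume ({x : ℝ | r.IsRoot x}ᶜ ∩ Set.Ioc (-1:ℝ) 1) :=
          measure_union_le _ _
      _ = 0 := by rw [hfin.measure_zero, h0]; simp
  rw [Real.volume_Ioc] at hIoc
  norm_num at hIoc

lemma span_lemma (q : ℕ) (hq : 1 ≤ q) (S : Polynomial ℝ) (hdeg : S.natDegree ≤ q + 1)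
    (horth : ∀ w : Polynomial ℝ, w.natDegree < q →
      ∫ x in (-1:ℝ)..1, S.eval x * w.eval x = 0) :
    ∃ c d : ℝ, S = C c * legendrePoly q + C d * legendrePoly (q+1) := by
  set L1 := legendrePoly q with hL1
  set L2 := legendrePoly (q+1) with hL2
  have hl1 : L1.coeff q ≠ 0 := leg_coeff q
  have hl2 : L2.coeff (q+1) ≠ 0 := leg_coeff (q+1)
  set d := S.coeff (q+1) / L2.coeff (q+1) with hd
  set c := (S - C d * L2).coeff q / L1.coeff q with hc
  set r := S - C d * L2 - C c * L1 with hrdef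
  have hr2 : r.coeff (q+1) = 0 := by
    rw [hrdef]
    simp only [Polynomial.coeff_sub, Polynomial.coeff_C_mul]
    rw [Polynomial.coeff_eq_zero_of_natDegree_lt (by rw [leg_natDegree]; omega : L1.natDegree < q+1)]
    rw [hd]
    field_simp
    ring
  have hr1 : r.coeff q = 0 := by
    rw [hrdef, hc]
    simp only [Polynomial.coeff_sub, Polynomial.coeff_C_mul]
    field_simp
    ring
  have hrdeg : r.natDegree < q := by
    have hb : r.natDegree ≤ q + 1 := by
      refine (Polynomial.natDegree_sub_le _ _).trans ?_
      simp only [max_le_iff]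
      constructor
      · refine (Polynomial.natDegree_sub_le _ _).trans ?_
        simp only [max_le_iff]
        exact ⟨hdeg, (natDegree_C_mul_le _ _).trans (by rw [leg_natDegree])⟩
      · exact (natDegree_C_mul_le _ _).trans (by rw [leg_natDegree]; omega)
    rcases Nat.lt_or_ge r.natDegree q with h | h
    · exact h
    exfalso
    have hne : r ≠ 0 := by
      intro h0
      rw [h0] at h
      simp at h; omega
    have hlc := Polynomial.leadingCoeff_ne_zero.mpr hne
    have hcase : r.natDegree = q ∨ r.natDegree = q+1 := by omega
    rcases hcase with h' | h'
    · rw [Polynomial.leadingCoeff, h'] at hlc; exact hlc hr1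
    · rw [Polynomial.leadingCoeff, h'] at hlc; exact hlc hr2
  -- now r ⊥ itself
  have hSr : S = r + C c * L1 + C d * L2 := by rw [hrdef]; ring
  have hint : ∫ x in (-1:ℝ)..1, r.eval x * r.eval x = 0 := by
    have e1 : ∫ x in (-1:ℝ)..1, S.eval x * r.eval x = 0 := horth r hrdeg
    have e2 : ∫ x in (-1:ℝ)..1, L1.eval x * r.eval x = 0 := legOrth q r hrdeg
    have e3 : ∫ x in (-1:ℝ)..1, L2.eval x * r.eval x = 0 := legOrth (q+1) r (by omega)
    have expand : ∀ x : ℝ, r.eval x * r.eval x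
        = S.eval x * r.eval x - c * (L1.eval x * r.eval x) - d * (L2.eval x * r.eval x) := by
      intro x
      rw [hSr]
      simp only [Polynomial.eval_add, Polynomial.eval_mul, Polynomial.eval_C]
      ring
    rw [intervalIntegral.integral_congr (fun x _ => expand x)]
    rw [intervalIntegral.integral_sub, intervalIntegral.integral_sub,
        intervalIntegral.integral_const_mul, intervalIntegral.integral_const_mul, e1, e2, e3]
    · ring
    · exact polyMulIntegrable S r _ _
    · exact (polyMulIntegrable L1 r _ _).const_mul c
    · exact ((polyMulIntegrable S r _ _).sub ((polyMulIntegrable L1 r _ _).const_mul c))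
    · exact (polyMulIntegrable L2 r _ _).const_mul d
  have hr0 : r = 0 := poly_eq_zero_of_integral_sq r hint
  refine ⟨c, d, ?_⟩
  have h0 : S - C d * L2 - C c * L1 = 0 := by rw [← hrdef]; exact hr0
  linear_combination h0

/-- The mdG residual is a Radau polynomial for decoupled linear right-hand sides: if `U` is a
polynomial of degree `≤ q` on `[a,b]` satisfying the discontinuous Galerkin orthogonality
`(U(a) − u_a) v(a) + ∫_a^b (U'(t) − (α U(t) + β)) v(t) dt = 0` for all polynomials `v` of
degree `≤ q`, then the residual `R(t) = U'(t) − (α U(t) + β)` is a scalar multiple of the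
rescaled `q`-th Radau polynomial `Q_q = (P_q + P_{q+1})/(x+1)`. -/
theorem mdG_residual_is_radau
    (a b : ℝ) (hab : a < b) (q : ℕ) (hq : 1 ≤ q) (α β u_a : ℝ)
    (Q : Polynomial ℝ)
    (hQ : legendrePoly q + legendrePoly (q + 1) = (Polynomial.X + Polynomial.C 1) * Q)
    (U : Polynomial ℝ) (hU : U.natDegree ≤ q)
    (hGal : ∀ v : Polynomial ℝ, v.natDegree ≤ q →
      (U.eval a - u_a) * v.eval a +
          ∫ t in a..b, (U.derivative.eval t - (α * U.eval t + β)) * v.eval t = 0) :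
    ∃ c : ℝ, ∀ t : ℝ,
      U.derivative.eval t - (α * U.eval t + β)
        = c * Q.eval ((2 * t - a - b) / (b - a)) := by
  have hba : b - a ≠ 0 := sub_ne_zero.mpr hab.ne'
  set R : Polynomial ℝ := Polynomial.derivative U - (C α * U + C β) with hR
  have hReval : ∀ t, R.eval t = U.derivative.eval t - (α * U.eval t + β) := by
    intro t; simp [hR]
  set S : Polynomial ℝ := (X - C a) * R with hS
  have hRdeg : R.natDegree ≤ q := by
    refine (natDegree_sub_le _ _).trans (max_le ?_ ?_)
    · exact le_trans (natDegree_derivative_le U) (le_trans (Nat.sub_le _ _) hU)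
    · refine (natDegree_add_le _ _).trans (max_le ((natDegree_C_mul_le _ _).trans hU) ?_)
      simp
  have hSdeg : S.natDegree ≤ q + 1 := by
    refine natDegree_mul_le.trans ?_
    have h1 : (X - C a : Polynomial ℝ).natDegree = 1 := natDegree_X_sub_C a
    omega
  have horthS : ∀ w : Polynomial ℝ, w.natDegree < q →
      (∫ t in a..b, S.eval t * w.eval t) = 0 := by
    intro w hw
    have hv : ((X - C a) * w).natDegree ≤ q := by
      refine natDegree_mul_le.trans ?_
      rw [natDegree_X_sub_C]; omega
    have hg := hGal ((X - C a) * w) hv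
    have heval : ∀ t, (U.derivative.eval t - (α * U.eval t + β)) * ((X - C a)*w).eval t
        = S.eval t * w.eval t := by
      intro t
      rw [hS]
      simp only [Polynomial.eval_mul, Polynomial.eval_sub, Polynomial.eval_add,
        Polynomial.eval_X, Polynomial.eval_C, hReval]
      ring
    rw [intervalIntegral.integral_congr (fun t _ => heval t)] at hg
    simp only [Polynomial.eval_mul, Polynomial.eval_sub, Polynomial.eval_X,
      Polynomial.eval_C, sub_self, zero_mul, mul_zero, zero_add] at hg
    exact hg
  -- transport to [-1,1]
  set k : ℝ := 2 / (b - a) with hk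
  have hk0 : k ≠ 0 := div_ne_zero two_ne_zero hba
  set m : ℝ := -(a + b) / (b - a) with hm
  set τ : Polynomial ℝ := C ((b-a)/2) * X + C ((a+b)/2) with hτ
  set σp : Polynomial ℝ := C k * X + C m with hσ
  set St : Polynomial ℝ := S.comp τ with hSt
  have hσeval : ∀ t : ℝ, σp.eval t = (2*t - a - b)/(b - a) := by
    intro t
    simp only [hσ, Polynomial.eval_add, Polynomial.eval_mul, Polynomial.eval_C,
      Polynomial.eval_X, hk, hm]
    field_simp
    ring
  have hτσ : ∀ t : ℝ, τ.eval (σp.eval t) = t := by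
    intro t
    rw [hσeval]
    simp only [hτ, Polynomial.eval_add, Polynomial.eval_mul, Polynomial.eval_C,
      Polynomial.eval_X]
    field_simp
    ring
  have hStσ : ∀ t : ℝ, St.eval (σp.eval t) = S.eval t := by
    intro t; rw [hSt, Polynomial.eval_comp, hτσ]
  have hτdeg : τ.natDegree ≤ 1 :=
    (natDegree_add_le _ _).trans (max_le ((natDegree_C_mul_le _ _).trans natDegree_X_le)
      (by simp))
  have hσdeg : σp.natDegree ≤ 1 :=
    (natDegree_add_le _ _).trans (max_le ((natDegree_C_mul_le _ _).trans natDegree_X_le)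
      (by simp))
  have hStdeg : St.natDegree ≤ q + 1 := by
    refine natDegree_comp_le.trans ?_
    exact (Nat.mul_le_mul hSdeg hτdeg).trans (by omega)
  have ea : k * a + m = -1 := by rw [hk, hm]; field_simp; ring
  have eb : k * b + m = 1 := by rw [hk, hm]; field_simp; ring
  have horthSt : ∀ w : Polynomial ℝ, w.natDegree < q →
      (∫ x in (-1:ℝ)..1, St.eval x * w.eval x) = 0 := by
    intro w hw
    have hcomp : (w.comp σp).natDegree < q :=
      lt_of_le_of_lt (natDegree_comp_le.trans ((Nat.mul_le_mul_left _ hσdeg).trans (by omega)))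
        hw
    have key := intervalIntegral.integral_comp_mul_add (a := a) (b := b)
      (f := fun x => St.eval x * w.eval x) hk0 m
    rw [ea, eb] at key
    have hL : (∫ t in a..b, St.eval (k*t+m) * w.eval (k*t+m))
        = ∫ t in a..b, S.eval t * (w.comp σp).eval t := by
      refine intervalIntegral.integral_congr fun t _ => ?_
      have hkt : k * t + m = σp.eval t := by
        simp [hσ]
      rw [hkt, hStσ, Polynomial.eval_comp]
    rw [hL, horthS _ hcomp] at key
    have key2 := key.symm
    rw [smul_eq_mul] at key2
    rcases mul_eq_zero.mp key2 with h | h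
    · exact absurd h (inv_ne_zero hk0)
    · exact h
  obtain ⟨c, d, hcd⟩ := span_lemma q hq St hStdeg horthSt
  have hSta : St.eval (-1) = 0 := by
    have hτa : τ.eval (-1) = a := by
      simp only [hτ, Polynomial.eval_add, Polynomial.eval_mul, Polynomial.eval_C,
        Polynomial.eval_X]
      ring
    rw [hSt, Polynomial.eval_comp, hτa, hS]
    simp
  have hc_eq_d : c = d := by
    rw [hcd] at hSta
    simp only [Polynomial.eval_add, Polynomial.eval_mul, Polynomial.eval_C] at hSta
    rw [leg_eval_neg_one, leg_eval_neg_one] at hSta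
    have h1 : (-1:ℝ)^q ≠ 0 := pow_ne_zero _ (by norm_num)
    have h2 : (-1:ℝ)^q * (c - d) = 0 := by
      rw [pow_succ] at hSta
      linear_combination hSta
    have := mul_eq_zero.mp h2
    rcases this with h | h
    · exact absurd h h1
    · linarith [sub_eq_zero.mp h]
  have hStx : ∀ x : ℝ, St.eval x = c * ((x + 1) * Q.eval x) := by
    intro x
    rw [hcd, hc_eq_d]
    have hQx := congrArg (Polynomial.eval x) hQ
    simp only [Polynomial.eval_add, Polynomial.eval_mul, Polynomial.eval_C,
      Polynomial.eval_X] at hQx ⊢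
    linear_combination d * hQx
  have hfun : ∀ t : ℝ, (t - a) * (U.derivative.eval t - (α * U.eval t + β))
      = (t - a) * (2 * c / (b - a) * Q.eval ((2*t - a - b)/(b-a))) := by
    intro t
    have h2 : S.eval t = (t - a) * R.eval t := by
      rw [hS]; simp [Polynomial.eval_mul]
    have h1 : (t - a) * R.eval t = c * ((σp.eval t + 1) * Q.eval (σp.eval t)) := by
      rw [← h2, ← hStσ t, hStx]
    have h4 : σp.eval t + 1 = 2*(t - a)/(b - a) := by
      rw [hσeval]; field_simp; ring
    rw [hReval] at h1
    rw [h1, h4, hσeval]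
    field_simp
  refine ⟨2 * c / (b - a), ?_⟩
  have hcontQarg : Continuous (fun t : ℝ => (2 * t - a - b) / (b - a)) :=
    (((continuous_const.mul continuous_id).sub continuous_const).sub continuous_const).div_const _
  have hcont1 : Continuous (fun t : ℝ => U.derivative.eval t - (α * U.eval t + β)) :=
    U.derivative.continuous.sub ((continuous_const.mul U.continuous).add continuous_const)
  have hcont2 : Continuous (fun t : ℝ => 2*c/(b-a) * Q.eval ((2*t - a - b)/(b-a))) :=
    continuous_const.mul (Q.continuous.comp hcontQarg)
  have hfeq : (fun t : ℝ => U.derivative.eval t - (α * U.eval t + β))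
      = fun t => 2*c/(b-a) * Q.eval ((2*t - a - b)/(b-a)) := by
    apply Continuous.ext_on (dense_compl_singleton a) hcont1 hcont2
    intro t ht
    have hta : t - a ≠ 0 := sub_ne_zero.mpr ht
    exact mul_left_cancel₀ hta (hfun t)
  intro t
  exact congrFun hfeq t
end

section
/- The L²-projection of the mdG residual is a Radau polynomial: Let a < b, q ≥ 1, and let g ∈ L²(a,b) satisfy ∫_a^b g(t) (t − a)^p dt = 0 for every p = 1, …, q. Let R̃ be the orthogonal projection of g in L²(a,b) onto the subspace of polynomials of degree ≤ q. Then R̃ is a scalar multiple of the rescaled q-th Radau polynomial: R̃(t) = c · Q_q(σ(t)) for some c ∈ ℝ, where σ(t) = (2t − a − b)/(b − a) (so σ(a) = −1). -/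
open MeasureTheory intervalIntegral Polynomial

lemma iterDeriv_eval_pm_one (n j : ℕ) (hj : j < n) (x : ℝ) (hx : x ^ 2 = 1) :
    (Polynomial.derivative^[j] (((X : Polynomial ℝ) ^ 2 - 1) ^ n)).eval x = 0 := by
  obtain ⟨c, hc⟩ := ((X : Polynomial ℝ) ^ 2 - 1).pow_sub_dvd_iterate_derivative_pow n j
  rw [hc, eval_mul, eval_pow, eval_sub, eval_pow, eval_X, eval_one, hx, sub_self,
    zero_pow (by omega), zero_mul]

lemma integral_deriv_poly (p : Polynomial ℝ) (a b : ℝ) :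
    ∫ x in a..b, (Polynomial.derivative p).eval x = p.eval b - p.eval a := by
  refine intervalIntegral.integral_eq_sub_of_hasDerivAt (fun x _ => p.hasDerivAt x) ?_
  exact (Polynomial.derivative p).continuous.intervalIntegrable a b

lemma ibp (n j : ℕ) (hj : j < n) (u : Polynomial ℝ) :
    ∫ x in (-1:ℝ)..1,
      (Polynomial.derivative^[j+1] (((X : Polynomial ℝ) ^ 2 - 1) ^ n)).eval x * u.eval x =
    - ∫ x in (-1:ℝ)..1,
      (Polynomial.derivative^[j] (((X : Polynomial ℝ) ^ 2 - 1) ^ n)).eval x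
        * (Polynomial.derivative u).eval x := by
  have hd : Polynomial.derivative
        (Polynomial.derivative^[j] (((X : Polynomial ℝ) ^ 2 - 1) ^ n) * u)
      = Polynomial.derivative^[j+1] (((X : Polynomial ℝ) ^ 2 - 1) ^ n) * u
        + Polynomial.derivative^[j] (((X : Polynomial ℝ) ^ 2 - 1) ^ n)
          * Polynomial.derivative u := by
    rw [Polynomial.derivative_mul, Function.iterate_succ_apply']
  have h0 := integral_deriv_poly
    (Polynomial.derivative^[j] (((X : Polynomial ℝ) ^ 2 - 1) ^ n) * u) (-1) 1
  rw [hd] at h0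
  rw [eval_mul, eval_mul, iterDeriv_eval_pm_one n j hj 1 (by norm_num),
    iterDeriv_eval_pm_one n j hj (-1) (by norm_num), zero_mul, zero_mul, sub_zero] at h0
  have hsplit : ∫ x in (-1:ℝ)..1,
      (Polynomial.derivative^[j+1] (((X : Polynomial ℝ) ^ 2 - 1) ^ n) * u
        + Polynomial.derivative^[j] (((X : Polynomial ℝ) ^ 2 - 1) ^ n)
          * Polynomial.derivative u).eval x
      = (∫ x in (-1:ℝ)..1,
          (Polynomial.derivative^[j+1] (((X : Polynomial ℝ) ^ 2 - 1) ^ n)).eval x * u.eval x)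
        + ∫ x in (-1:ℝ)..1,
          (Polynomial.derivative^[j] (((X : Polynomial ℝ) ^ 2 - 1) ^ n)).eval x
            * (Polynomial.derivative u).eval x := by
    simp only [eval_add, eval_mul]
    exact intervalIntegral.integral_add
      (((Polynomial.derivative^[j+1] (((X : Polynomial ℝ) ^ 2 - 1) ^ n)).continuous.mul
        u.continuous).intervalIntegrable _ _)
      (((Polynomial.derivative^[j] (((X : Polynomial ℝ) ^ 2 - 1) ^ n)).continuous.mul
        (Polynomial.derivative u).continuous).intervalIntegrable _ _)
  rw [hsplit] at h0
  linarith

lemma core_orth (n : ℕ) (u : Polynomial ℝ) (hu : u.natDegree < n) :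
    ∫ x in (-1:ℝ)..1,
      (Polynomial.derivative^[n] (((X : Polynomial ℝ) ^ 2 - 1) ^ n)).eval x * u.eval x = 0 := by
  have aux : ∀ i, i ≤ n → ∀ v : Polynomial ℝ,
      (∫ x in (-1:ℝ)..1,
        (Polynomial.derivative^[n] (((X : Polynomial ℝ) ^ 2 - 1) ^ n)).eval x * v.eval x)
      = (-1:ℝ)^i * ∫ x in (-1:ℝ)..1,
          (Polynomial.derivative^[n-i] (((X : Polynomial ℝ) ^ 2 - 1) ^ n)).eval x
            * (Polynomial.derivative^[i] v).eval x := by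
    intro i
    induction i with
    | zero => intro _ v; simp
    | succ i ih =>
      intro hi v
      rw [ih (by omega) v]
      have hni : n - i = (n - (i+1)) + 1 := by omega
      rw [hni, ibp n (n - (i+1)) (by omega) (Polynomial.derivative^[i] v)]
      rw [show Polynomial.derivative (Polynomial.derivative^[i] v)
        = Polynomial.derivative^[i+1] v from (Function.iterate_succ_apply' _ _ _).symm]
      ring
  have h := aux n le_rfl u
  have hz : Polynomial.derivative^[n] u = 0 := Polynomial.iterate_derivative_eq_zero hu
  rw [hz] at h
  simpa using h

lemma legendre_orth (n : ℕ) (u : Polynomial ℝ) (hu : u.natDegree < n) :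
    ∫ x in (-1:ℝ)..1, (legendrePoly n).eval x * u.eval x = 0 := by
  have h := core_orth n u hu
  unfold legendrePoly
  simp only [eval_mul, eval_C, mul_assoc]
  rw [intervalIntegral.integral_const_mul, h, mul_zero]

lemma monic_core : ((X : Polynomial ℝ) ^ 2 - 1).Monic := by
  have := Polynomial.monic_X_pow_sub_C (1 : ℝ) (n := 2) two_ne_zero
  rwa [Polynomial.C_1] at this

lemma natDeg_core (n : ℕ) :
    (((X : Polynomial ℝ) ^ 2 - 1) ^ n).natDegree = 2 * n := by
  rw [monic_core.natDegree_pow]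
  have h2 : ((X : Polynomial ℝ) ^ 2 - 1).natDegree = 2 := by
    rw [← Polynomial.C_1]; exact Polynomial.natDegree_X_pow_sub_C
  rw [h2]; ring

lemma legendre_natDegree_le (n : ℕ) : (legendrePoly n).natDegree ≤ n := by
  unfold legendrePoly
  refine (Polynomial.natDegree_C_mul_le _ _).trans ?_
  have := Polynomial.natDegree_iterate_derivative (((X : Polynomial ℝ) ^ 2 - 1) ^ n) n
  rw [natDeg_core] at this
  omega

lemma legendre_coeff_ne (n : ℕ) : (legendrePoly n).coeff n ≠ 0 := by
  unfold legendrePoly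
  rw [Polynomial.coeff_C_mul, Polynomial.coeff_iterate_derivative]
  have hc : (((X : Polynomial ℝ) ^ 2 - 1) ^ n).coeff (n + n) = 1 := by
    have := (monic_core.pow n).leadingCoeff
    rwa [Polynomial.leadingCoeff, natDeg_core, two_mul] at this
  rw [hc]
  rw [nsmul_eq_mul, mul_one]
  have h1 : (0:ℝ) < 1 / (2 ^ n * (Nat.factorial n) : ℝ) := by positivity
  have h2 : (0:ℝ) < ((n + n).descFactorial n : ℝ) := by
    exact_mod_cast Nat.pos_of_ne_zero (fun h => by have := Nat.descFactorial_eq_zero_iff_lt.mp h; omega)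
  positivity



lemma key_unique (a b : ℝ) (hab : a < b) (q : ℕ)
    (S : Polynomial ℝ) (hdeg : S.natDegree ≤ q)
    (hS : ∀ p : ℕ, 1 ≤ p → p ≤ q → ∫ t in a..b, S.eval t * (t - a) ^ p = 0)
    (ha : S.eval a = 0) : S = 0 := by
  by_contra hS0
  obtain ⟨T, hT⟩ := Polynomial.dvd_iff_isRoot.mpr ha
  have hT0 : T ≠ 0 := fun h => hS0 (by rw [hT, h, mul_zero])
  have hXa : (X - C a : Polynomial ℝ) ≠ 0 := Polynomial.X_sub_C_ne_zero a
  have hdegT : T.natDegree < q := by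
    have h1 := Polynomial.natDegree_mul hXa hT0
    rw [← hT, Polynomial.natDegree_X_sub_C] at h1
    omega
  set c : ℕ → ℝ := fun i => (Polynomial.taylor a T).coeff i with hc
  have hTev : ∀ t : ℝ, T.eval t = ∑ i ∈ Finset.range q, c i * (t - a) ^ i := by
    intro t
    conv_lhs => rw [← Polynomial.sum_taylor_eq T a]
    rw [Polynomial.sum_over_range' _ (fun n => by simp) q
      (by rw [Polynomial.natDegree_taylor]; omega)]
    simp [hc, Polynomial.eval_finset_sum]
  have hSev : ∀ t : ℝ, S.eval t = (t - a) * T.eval t := by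
    intro t; rw [hT]; simp
  have hI : ∫ t in a..b, (S.eval t) ^ 2 = 0 := by
    have h1 : ∀ t : ℝ, (S.eval t) ^ 2
        = ∑ i ∈ Finset.range q, c i * (S.eval t * (t - a) ^ (i + 1)) := by
      intro t
      rw [sq]
      nth_rewrite 2 [hSev t]
      rw [hTev t, Finset.mul_sum, Finset.mul_sum]
      exact Finset.sum_congr rfl fun i _ => by ring
    simp only [h1]
    rw [intervalIntegral.integral_finset_sum
      (f := fun i t => c i * (S.eval t * (t - a) ^ (i + 1))) (fun i _ =>
      (Continuous.intervalIntegrable (by continuity) _ _))]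
    refine Finset.sum_eq_zero fun i hi => ?_
    rw [intervalIntegral.integral_const_mul, hS (i+1) (by omega)
      (by simp at hi; omega), mul_zero]
  have hnn : 0 ≤ᵐ[volume.restrict (Set.Ioc a b)] fun t => (S.eval t) ^ 2 :=
    Filter.Eventually.of_forall fun t => sq_nonneg _
  have hint : IntervalIntegrable (fun t => (S.eval t) ^ 2) volume a b :=
    (S.continuous.pow 2).intervalIntegrable a b
  have hae0 := (intervalIntegral.integral_eq_zero_iff_of_le_of_nonneg_ae hab.le hnn hint).mp hI
  have hae : ∀ᵐ t ∂(volume.restrict (Set.Ioc a b)), S.eval t = 0 := by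
    filter_upwards [hae0] with t ht
    have : (S.eval t) ^ 2 = 0 := ht
    exact pow_eq_zero_iff (n := 2) (by norm_num) |>.mp this
  have hroots : {t : ℝ | S.IsRoot t}.Finite := Polynomial.finite_setOf_isRoot hS0
  have hcompl : volume ({t : ℝ | ¬ S.eval t = 0} ∩ Set.Ioc a b) = 0 := by
    have := ae_iff.mp hae
    rwa [Measure.restrict_apply' measurableSet_Ioc] at this
  have hzero : volume ({t : ℝ | S.eval t = 0} ∩ Set.Ioc a b) = 0 :=
    measure_mono_null Set.inter_subset_left (hroots.measure_zero volume)
  have hmeas : volume (Set.Ioc a b) = 0 := by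
    have hsub : Set.Ioc a b ⊆ ({t : ℝ | S.eval t = 0} ∩ Set.Ioc a b)
        ∪ ({t : ℝ | ¬ S.eval t = 0} ∩ Set.Ioc a b) := by
      intro t ht
      by_cases h : S.eval t = 0
      · exact Or.inl ⟨h, ht⟩
      · exact Or.inr ⟨h, ht⟩
    refine le_antisymm ?_ zero_le
    calc volume (Set.Ioc a b) ≤ _ := measure_mono hsub
      _ ≤ volume ({t : ℝ | S.eval t = 0} ∩ Set.Ioc a b)
          + volume ({t : ℝ | ¬ S.eval t = 0} ∩ Set.Ioc a b) := measure_union_le _ _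
      _ = 0 := by rw [hzero, hcompl, add_zero]
  rw [Real.volume_Ioc] at hmeas
  exact absurd hmeas (ENNReal.ofReal_pos.mpr (by linarith)).ne'

/-- The L²-projection of the mdG residual is a Radau polynomial: if `g ∈ L²(a,b)` satisfies
`∫_a^b g(t) (t−a)^p dt = 0` for `p = 1, …, q`, then its orthogonal projection `R̃` in `L²(a,b)`
onto the polynomials of degree `≤ q` (characterized by `R̃` being such a polynomial with
`g − R̃` orthogonal to all polynomials of degree `≤ q`) is a scalar multiple of the rescaled
`q`-th Radau polynomial `Q_q = (P_q + P_{q+1})/(x+1)`. -/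
theorem mdG_projected_residual_is_radau
    (a b : ℝ) (hab : a < b) (q : ℕ) (hq : 1 ≤ q)
    (Q : Polynomial ℝ)
    (hQ : legendrePoly q + legendrePoly (q + 1) = (Polynomial.X + Polynomial.C 1) * Q)
    (g : ℝ → ℝ) (hg : MemLp g 2 (MeasureTheory.volume.restrict (Set.Ioc a b)))
    (horth : ∀ p : ℕ, 1 ≤ p → p ≤ q →
      ∫ t in a..b, g t * (t - a) ^ p = 0)
    (R : Polynomial ℝ) (hRdeg : R.natDegree ≤ q)
    (hproj : ∀ v : Polynomial ℝ, v.natDegree ≤ q →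
      ∫ t in a..b, (g t - R.eval t) * v.eval t = 0) :
    ∃ c : ℝ, ∀ t : ℝ,
      R.eval t = c * Q.eval ((2 * t - a - b) / (b - a)) := by
  have hba : b - a ≠ 0 := sub_ne_zero.mpr hab.ne'
  -- Step 1 : R is orthogonal to (t-a)^p, p = 1..q
  haveI : IsFiniteMeasure (volume.restrict (Set.Ioc a b)) :=
    ⟨by rw [Measure.restrict_apply_univ]; exact measure_Ioc_lt_top⟩
  have hgint : Integrable g (volume.restrict (Set.Ioc a b)) := hg.integrable one_le_two
  have hRorth : ∀ p : ℕ, 1 ≤ p → p ≤ q →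
      ∫ t in a..b, R.eval t * (t - a) ^ p = 0 := by
    intro p hp1 hpq
    set v : Polynomial ℝ := (X - C a) ^ p with hv
    have hvdeg : v.natDegree ≤ q :=
      natDegree_pow_le.trans (by rw [Polynomial.natDegree_X_sub_C]; omega)
    have hvev : ∀ t : ℝ, v.eval t = (t - a) ^ p := by intro t; simp [hv]
    obtain ⟨C0, hC0⟩ := isCompact_Icc.exists_bound_of_continuousOn
      (s := Set.Icc a b) (v.continuous.continuousOn)
    have hbd : ∀ᵐ t ∂(volume.restrict (Set.Ioc a b)), ‖v.eval t‖ ≤ C0 := by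
      filter_upwards [ae_restrict_mem measurableSet_Ioc] with t ht
      exact hC0 t (Set.Ioc_subset_Icc_self ht)
    have hprod : Integrable (fun t => v.eval t * g t) (volume.restrict (Set.Ioc a b)) :=
      hgint.bdd_mul (v.continuous.aestronglyMeasurable) hbd
    have hIgv : IntervalIntegrable (fun t => g t * v.eval t) volume a b := by
      rw [intervalIntegrable_iff_integrableOn_Ioc_of_le hab.le]
      exact hprod.congr (Filter.Eventually.of_forall fun t => mul_comm _ _)
    have hIRv : IntervalIntegrable (fun t => R.eval t * v.eval t) volume a b :=
      (R.continuous.mul v.continuous).intervalIntegrable _ _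
    have h1 := hproj v hvdeg
    have h2 : ∫ t in a..b, (g t * v.eval t - R.eval t * v.eval t) = 0 := by
      rw [← h1]; congr 1; funext t; ring
    rw [intervalIntegral.integral_sub hIgv hIRv] at h2
    have h3 : ∫ t in a..b, g t * v.eval t = 0 := by
      have := horth p hp1 hpq
      rw [← this]; congr 1; funext t; rw [hvev]
    have h4 : ∫ t in a..b, R.eval t * v.eval t = 0 := by linarith
    rw [← h4]; congr 1; funext t; rw [hvev]
  -- basic degree facts about Q
  have hPsum_deg : (legendrePoly q + legendrePoly (q+1)).natDegree ≤ q + 1 :=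
    (Polynomial.natDegree_add_le _ _).trans
      (max_le ((legendre_natDegree_le q).trans (by omega)) (legendre_natDegree_le (q+1)))
  have hcoeff : (legendrePoly q + legendrePoly (q+1)).coeff (q+1) ≠ 0 := by
    rw [Polynomial.coeff_add, Polynomial.coeff_eq_zero_of_natDegree_lt
      (lt_of_le_of_lt (legendre_natDegree_le q) (by omega)), zero_add]
    exact legendre_coeff_ne (q+1)
  have hsum_ne : legendrePoly q + legendrePoly (q+1) ≠ 0 := fun h => hcoeff (by rw [h]; simp)
  have hQne : Q ≠ 0 := fun h => hsum_ne (by rw [hQ, h, mul_zero])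
  have hXC : (X + C 1 : Polynomial ℝ) ≠ 0 := (Polynomial.monic_X_add_C (1:ℝ)).ne_zero
  have hQdeg : Q.natDegree ≤ q := by
    have h1 := Polynomial.natDegree_mul hXC hQne
    rw [← hQ, Polynomial.natDegree_X_add_C] at h1
    omega
  -- the rescaled Radau polynomial
  set σp : Polynomial ℝ := C (2/(b-a)) * X + C (-(a+b)/(b-a)) with hσp
  have hσev : ∀ t : ℝ, σp.eval t = 2/(b-a) * t + (-(a+b)/(b-a)) := by
    intro t; simp [hσp]
  set Qσ : Polynomial ℝ := Q.comp σp with hQσ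
  have hQσev : ∀ t : ℝ, Qσ.eval t = Q.eval (2/(b-a) * t + (-(a+b)/(b-a))) := by
    intro t; rw [hQσ, Polynomial.eval_comp, hσev]
  have harg : ∀ t : ℝ, 2/(b-a) * t + (-(a+b)/(b-a)) = (2*t - a - b)/(b-a) := by
    intro t; field_simp; ring
  have hσdeg : σp.natDegree ≤ 1 := by
    refine (Polynomial.natDegree_add_le _ _).trans (max_le ?_ ?_)
    · exact (Polynomial.natDegree_C_mul_le _ _).trans (by rw [Polynomial.natDegree_X])
    · simp
  have hQσdeg : Qσ.natDegree ≤ q :=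
    Polynomial.natDegree_comp_le.trans (by
      calc Q.natDegree * σp.natDegree ≤ q * 1 := Nat.mul_le_mul hQdeg hσdeg
        _ = q := by omega)
  -- orthogonality of Qσ
  have hQσorth : ∀ p : ℕ, 1 ≤ p → p ≤ q →
      ∫ t in a..b, Qσ.eval t * (t - a) ^ p = 0 := by
    intro p hp1 hpq
    obtain ⟨p', rfl⟩ : ∃ p', p = p' + 1 := ⟨p - 1, by omega⟩
    -- Legendre orthogonality on [-1,1]
    have hudeg : ((X + C 1 : Polynomial ℝ) ^ p').natDegree ≤ p' :=
      natDegree_pow_le.trans (by rw [Polynomial.natDegree_X_add_C]; omega)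
    have hleg : ∫ x in (-1:ℝ)..1, Q.eval x * (x+1)^(p'+1) = 0 := by
      have e1 : ∀ x : ℝ, Q.eval x * (x+1)^(p'+1)
          = (legendrePoly q).eval x * ((X + C 1 : Polynomial ℝ)^p').eval x
            + (legendrePoly (q+1)).eval x * ((X + C 1 : Polynomial ℝ)^p').eval x := by
        intro x
        have h := congrArg (Polynomial.eval x) hQ
        simp only [eval_add, eval_mul, eval_X, eval_C] at h
        simp only [eval_pow, eval_add, eval_X, eval_C]
        rw [← add_mul, h, pow_succ]
        ring
      simp only [e1]
      rw [intervalIntegral.integral_add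
        (f := fun x => (legendrePoly q).eval x * ((X + C 1 : Polynomial ℝ)^p').eval x)
        (g := fun x => (legendrePoly (q+1)).eval x * ((X + C 1 : Polynomial ℝ)^p').eval x)
        (((legendrePoly q).continuous.mul
          ((X + C 1 : Polynomial ℝ)^p').continuous).intervalIntegrable _ _)
        (((legendrePoly (q+1)).continuous.mul
          ((X + C 1 : Polynomial ℝ)^p').continuous).intervalIntegrable _ _),
        legendre_orth q _ (lt_of_le_of_lt hudeg (by omega)),
        legendre_orth (q+1) _ (lt_of_le_of_lt hudeg (by omega)), add_zero]
    -- change of variables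
    have hc2 : (2/(b-a) : ℝ) ≠ 0 := div_ne_zero two_ne_zero hba
    have key := intervalIntegral.integral_comp_mul_add (a := a) (b := b)
      (f := fun x => Q.eval x * ((b-a)/2*(x+1))^(p'+1)) hc2 (-(a+b)/(b-a))
    have hlo : 2/(b-a) * a + (-(a+b)/(b-a)) = (-1 : ℝ) := by field_simp; ring
    have hhi : 2/(b-a) * b + (-(a+b)/(b-a)) = (1 : ℝ) := by field_simp; ring
    rw [hlo, hhi] at key
    have hLHS : (∫ t in a..b, Qσ.eval t * (t - a) ^ (p'+1))
        = ∫ t in a..b, (fun x => Q.eval x * ((b-a)/2*(x+1))^(p'+1))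
            (2/(b-a) * t + (-(a+b)/(b-a))) := by
      congr 1; funext t
      simp only [hQσev t]
      congr 2
      field_simp
      ring
    have hRHS : (∫ x in (-1:ℝ)..1, Q.eval x * ((b-a)/2*(x+1))^(p'+1)) = 0 := by
      have e2 : ∀ x : ℝ, Q.eval x * ((b-a)/2*(x+1))^(p'+1)
          = ((b-a)/2)^(p'+1) * (Q.eval x * (x+1)^(p'+1)) := by
        intro x; rw [mul_pow]; ring
      simp only [e2]
      rw [intervalIntegral.integral_const_mul, hleg, mul_zero]
    rw [hLHS, key, hRHS, smul_zero]
  -- Qσ does not vanish at a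
  have hQσa_ne : Qσ.eval a ≠ 0 := by
    intro h0
    have hz := key_unique a b hab q Qσ hQσdeg hQσorth h0
    apply hQne
    apply Polynomial.funext
    intro x
    have ht := congrArg (Polynomial.eval ((x*(b-a) + a + b)/2)) hz
    rw [hQσev, Polynomial.eval_zero] at ht
    have : 2/(b-a) * ((x*(b-a) + a + b)/2) + (-(a+b)/(b-a)) = x := by field_simp; ring
    rw [this] at ht
    rw [ht, Polynomial.eval_zero]
  -- conclusion
  set c0 : ℝ := R.eval a / Qσ.eval a with hc0
  have hSdeg : (R - C c0 * Qσ).natDegree ≤ q :=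
    (Polynomial.natDegree_sub_le _ _).trans
      (max_le hRdeg ((Polynomial.natDegree_C_mul_le _ _).trans hQσdeg))
  have hSorth : ∀ p : ℕ, 1 ≤ p → p ≤ q →
      ∫ t in a..b, (R - C c0 * Qσ).eval t * (t - a) ^ p = 0 := by
    intro p hp1 hpq
    have e3 : ∀ t : ℝ, (R - C c0 * Qσ).eval t * (t - a) ^ p
        = R.eval t * (t-a)^p - c0 * (Qσ.eval t * (t-a)^p) := by
      intro t; simp only [eval_sub, eval_mul, eval_C]; ring
    simp only [e3]
    rw [intervalIntegral.integral_sub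
      (f := fun t => R.eval t * (t-a)^p) (g := fun t => c0 * (Qσ.eval t * (t-a)^p))
      ((R.continuous.mul (by fun_prop)).intervalIntegrable _ _)
      ((continuous_const.mul (Qσ.continuous.mul (by fun_prop))).intervalIntegrable _ _),
      intervalIntegral.integral_const_mul, hRorth p hp1 hpq, hQσorth p hp1 hpq,
      mul_zero, sub_zero]
  have hSa : (R - C c0 * Qσ).eval a = 0 := by
    simp only [eval_sub, eval_mul, eval_C, hc0]
    rw [div_mul_cancel₀ _ hQσa_ne, sub_self]
  have hfin := key_unique a b hab q _ hSdeg hSorth hSa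
  refine ⟨c0, fun t => ?_⟩
  have := congrArg (Polynomial.eval t) (sub_eq_zero.mp hfin)
  rw [eval_mul, eval_C, hQσev t, harg t] at this
  exact this
end
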